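/- Let $x_1, \dots, x_D, x_q$ be i.i.d. $N(0, I_d)$ in $\mathbb{R}^d$ and $\theta \in \mathbb{R}^d$ fixed with $\|\theta\| \le 1$. Let $\epsilon = \sum_{i \ne j} w_{ij} (\theta^\top x_i)(x_j^\top x_q)$ where the real weights satisfy $|w_{ij}| \le \frac{2}{2\min(i,j) + \max(i,j) - 2}$. Then $\mathbb{E}[\epsilon] = 0$ and $\mathbb{E}[\epsilon^2] \le C d \log(D)$ for an absolute constant $C$. -/

import Mathlib

open MeasureTheory ProbabilityTheory Real Filter Asymptotics Set
open scoped ENNReal NNReal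
noncomputable section
namespace CT

lemma pdf_eq (x : ℝ) :
    gaussianPDFReal 0 1 x = (Real.sqrt (2 * π))⁻¹ * Real.exp (-x ^ 2 / 2) := by
  simp [gaussianPDFReal]

lemma integral_g1 (f : ℝ → ℝ) :
    ∫ x, f x ∂(gaussianReal 0 1) = ∫ x, gaussianPDFReal 0 1 x * f x := by
  rw [gaussianReal_of_var_ne_zero 0 one_ne_zero]
  have h : gaussianPDF 0 1 = fun x => ((gaussianPDFReal 0 1 x).toNNReal : ℝ≥0∞) := rfl
  rw [h, integral_withDensity_eq_integral_smul₀
    (measurable_gaussianPDFReal 0 1).real_toNNReal.aemeasurable]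
  congr 1
  funext x
  rw [NNReal.smul_def, Real.coe_toNNReal _ (gaussianPDFReal_nonneg _ _ _), smul_eq_mul]

lemma integrable_g1_iff {f : ℝ → ℝ} (hf : AEStronglyMeasurable f volume) :
    Integrable f (gaussianReal 0 1) ↔
      Integrable (fun x => gaussianPDFReal 0 1 x * f x) volume := by
  rw [gaussianReal_of_var_ne_zero 0 one_ne_zero]
  have h : gaussianPDF 0 1 = fun x => ((gaussianPDFReal 0 1 x).toNNReal : ℝ≥0∞) := rfl
  rw [h, integrable_withDensity_iff_integrable_smul₀
    (measurable_gaussianPDFReal 0 1).real_toNNReal.aemeasurable]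
  constructor <;> intro h' <;> refine h'.congr (ae_of_all _ fun x => ?_) <;>
    simp only [NNReal.smul_def, Real.coe_toNNReal _ (gaussianPDFReal_nonneg 0 1 x), smul_eq_mul]


-- pointwise bounds
lemma sq_exp_bound (x : ℝ) : x ^ 2 * Real.exp (-x ^ 2 / 2) ≤ 4 * Real.exp (-x ^ 2 / 4) := by
  have h1 : x ^ 2 / 4 ≤ Real.exp (x ^ 2 / 4) :=
    le_trans (le_add_of_nonneg_right zero_le_one) (Real.add_one_le_exp _)
  have h2 : x ^ 2 ≤ 4 * Real.exp (x ^ 2 / 4) := by linarith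
  have h3 : (0:ℝ) < Real.exp (-x ^ 2 / 2) := Real.exp_pos _
  calc x ^ 2 * Real.exp (-x ^ 2 / 2) ≤ 4 * Real.exp (x ^ 2 / 4) * Real.exp (-x ^ 2 / 2) := by
        exact mul_le_mul_of_nonneg_right h2 h3.le
    _ = 4 * Real.exp (-x ^ 2 / 4) := by
        rw [mul_assoc, ← Real.exp_add]; ring_nf

lemma abs_exp_bound (x : ℝ) : |x| * Real.exp (-x ^ 2 / 2) ≤ 5 * Real.exp (-x ^ 2 / 4) := by
  have h0 : |x| ≤ 1 + x ^ 2 := by nlinarith [abs_nonneg x, sq_abs x, sq_nonneg (|x| - 1)]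
  have h3 : (0:ℝ) < Real.exp (-x ^ 2 / 2) := Real.exp_pos _
  have h4 : Real.exp (-x ^ 2 / 2) ≤ Real.exp (-x ^ 2 / 4) :=
    Real.exp_le_exp.mpr (by nlinarith [sq_nonneg x])
  have := sq_exp_bound x
  calc |x| * Real.exp (-x ^ 2 / 2) ≤ (1 + x ^ 2) * Real.exp (-x ^ 2 / 2) :=
        mul_le_mul_of_nonneg_right h0 h3.le
    _ = Real.exp (-x ^ 2 / 2) + x ^ 2 * Real.exp (-x ^ 2 / 2) := by ring
    _ ≤ Real.exp (-x ^ 2 / 4) + 4 * Real.exp (-x ^ 2 / 4) := by linarith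
    _ = 5 * Real.exp (-x ^ 2 / 4) := by ring

lemma integrable_exp_quarter : Integrable (fun x : ℝ => Real.exp (-x ^ 2 / 4)) := by
  have := integrable_exp_neg_mul_sq (b := (1/4 : ℝ)) (by norm_num)
  refine this.congr (ae_of_all _ fun x => ?_)
  ring_nf

lemma integrable_sq_exp : Integrable (fun x : ℝ => x ^ 2 * Real.exp (-x ^ 2 / 2)) := by
  refine (integrable_exp_quarter.const_mul 4).mono ?_ (ae_of_all _ fun x => ?_)
  · exact (Continuous.mul (by continuity) (by continuity)).aestronglyMeasurable
  · rw [norm_mul, norm_of_nonneg (Real.exp_pos _).le, Real.norm_eq_abs,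
      abs_of_nonneg (sq_nonneg x), norm_of_nonneg (by positivity)]
    exact sq_exp_bound x

lemma integrable_id_exp : Integrable (fun x : ℝ => x * Real.exp (-x ^ 2 / 2)) := by
  refine (integrable_exp_quarter.const_mul 5).mono ?_ (ae_of_all _ fun x => ?_)
  · exact (Continuous.mul (by continuity) (by continuity)).aestronglyMeasurable
  · rw [norm_mul, norm_of_nonneg (Real.exp_pos _).le, Real.norm_eq_abs,
      norm_of_nonneg (by positivity)]
    exact abs_exp_bound x

lemma integrable_exp_half : Integrable (fun x : ℝ => Real.exp (-x ^ 2 / 2)) := by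
  have := integrable_exp_neg_mul_sq (b := (1/2 : ℝ)) (by norm_num)
  refine this.congr (ae_of_all _ fun x => ?_)
  ring_nf

lemma tendsto_id_exp_atTop :
    Tendsto (fun x : ℝ => x * Real.exp (-x ^ 2 / 2)) atTop (nhds 0) := by
  have h := rpow_mul_exp_neg_mul_sq_isLittleO_exp_neg (b := (1/2 : ℝ)) (by norm_num) 1
  have heq : (fun x : ℝ => x ^ (1:ℝ) * Real.exp (-(1/2) * x ^ 2))
      = fun x : ℝ => x * Real.exp (-x ^ 2 / 2) := by
    funext x
    rw [Real.rpow_one, show -(1/2 : ℝ) * x ^ 2 = -x ^ 2 / 2 by ring]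
  rw [heq] at h
  refine h.isBigO.trans_tendsto ?_
  have h3 : Tendsto (fun x : ℝ => -(1/2) * x) atTop atBot := by
    apply Tendsto.const_mul_atTop_of_neg (by norm_num : (-(1/2) : ℝ) < 0) tendsto_id
  exact Real.tendsto_exp_atBot.comp h3



lemma hasDerivAt_neg_exp (x : ℝ) :
    HasDerivAt (fun y : ℝ => -Real.exp (-y ^ 2 / 2)) (x * Real.exp (-x ^ 2 / 2)) x := by
  have h1 : HasDerivAt (fun y : ℝ => -y ^ 2 / 2) (-x) x := by
    have := (hasDerivAt_pow 2 x).neg.div_const 2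
    refine this.congr_deriv ?_
    simp; ring
  have := (Real.hasDerivAt_exp _).comp x h1
  refine this.neg.congr_deriv ?_
  ring

lemma integral_Ioi_id_exp : ∫ x in Ioi (0:ℝ), x * Real.exp (-x ^ 2 / 2) = 1 := by
  have h := integral_Ioi_of_hasDerivAt_of_tendsto' (a := 0) (m := 0)
    (f := fun y : ℝ => -Real.exp (-y ^ 2 / 2))
    (f' := fun x => x * Real.exp (-x ^ 2 / 2))
    (fun x _ => hasDerivAt_neg_exp x) integrable_id_exp.integrableOn ?_
  · rw [h]; norm_num
  · have : Tendsto (fun y : ℝ => Real.exp (-y ^ 2 / 2)) atTop (nhds 0) := by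
      have h3 : Tendsto (fun y : ℝ => -y ^ 2 / 2) atTop atBot := by
        have := (tendsto_pow_atTop (two_ne_zero)).const_mul_atTop_of_neg
          (show (-1/2 : ℝ) < 0 by norm_num) (f := fun y : ℝ => y ^ 2) (l := atTop)
        refine this.congr' (Eventually.of_forall fun y => by ring)
      exact Real.tendsto_exp_atBot.comp h3
    simpa using this.neg

lemma hasDerivAt_g (x : ℝ) :
    HasDerivAt (fun y : ℝ => -y * Real.exp (-y ^ 2 / 2))
      (x ^ 2 * Real.exp (-x ^ 2 / 2) - Real.exp (-x ^ 2 / 2)) x := by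
  have h1 : HasDerivAt (fun y : ℝ => -Real.exp (-y ^ 2 / 2))
      (x * Real.exp (-x ^ 2 / 2)) x := hasDerivAt_neg_exp x
  have h2 := (hasDerivAt_id x).mul h1
  refine (h2.congr_deriv (by simp only [id_eq]; ring)).congr_of_eventuallyEq
    (Eventually.of_forall fun y => ?_)
  simp only [Pi.mul_apply, id_eq]; ring

lemma integral_Ioi_sq_exp :
    ∫ x in Ioi (0:ℝ), x ^ 2 * Real.exp (-x ^ 2 / 2)
      = ∫ x in Ioi (0:ℝ), Real.exp (-x ^ 2 / 2) := by
  have h := integral_Ioi_of_hasDerivAt_of_tendsto' (a := 0) (m := 0)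
    (f := fun y : ℝ => -y * Real.exp (-y ^ 2 / 2))
    (f' := fun x => x ^ 2 * Real.exp (-x ^ 2 / 2) - Real.exp (-x ^ 2 / 2))
    (fun x _ => hasDerivAt_g x)
    ((integrable_sq_exp.sub integrable_exp_half).integrableOn) ?_
  · have hsplit : ∫ x in Ioi (0:ℝ),
        (x ^ 2 * Real.exp (-x ^ 2 / 2) - Real.exp (-x ^ 2 / 2))
        = (∫ x in Ioi (0:ℝ), x ^ 2 * Real.exp (-x ^ 2 / 2))
          - ∫ x in Ioi (0:ℝ), Real.exp (-x ^ 2 / 2) :=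
      integral_sub integrable_sq_exp.integrableOn integrable_exp_half.integrableOn
    rw [hsplit] at h
    simp at h
    linarith
  · simpa using tendsto_id_exp_atTop.neg

lemma integral_exp_half : ∫ x : ℝ, Real.exp (-x ^ 2 / 2) = Real.sqrt (2 * π) := by
  have := integral_gaussian (1/2)
  rw [show π / (1/2 : ℝ) = 2 * π by ring] at this
  rw [← this]
  congr 1; funext x; congr 1; ring

lemma integral_sq_exp_total :
    ∫ x : ℝ, x ^ 2 * Real.exp (-x ^ 2 / 2) = Real.sqrt (2 * π) := by
  have h1 : ∫ x : ℝ, x ^ 2 * Real.exp (-x ^ 2 / 2)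
      = 2 * ∫ x in Ioi (0:ℝ), x ^ 2 * Real.exp (-x ^ 2 / 2) := by
    rw [← integral_comp_abs (f := fun t : ℝ => t ^ 2 * Real.exp (-t ^ 2 / 2))]
    congr 1; funext x; rw [sq_abs]
  have h2 : ∫ x : ℝ, Real.exp (-x ^ 2 / 2)
      = 2 * ∫ x in Ioi (0:ℝ), Real.exp (-x ^ 2 / 2) := by
    rw [← integral_comp_abs (f := fun t : ℝ => Real.exp (-t ^ 2 / 2))]
    congr 1; funext x; rw [sq_abs]
  rw [h1, integral_Ioi_sq_exp, ← h2, integral_exp_half]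

lemma integral_id_exp_total : ∫ x : ℝ, x * Real.exp (-x ^ 2 / 2) = 0 := by
  have hIic : ∫ x in Iic (0:ℝ), x * Real.exp (-x ^ 2 / 2) = -1 := by
    have := integral_comp_neg_Ioi (0:ℝ) (fun x => x * Real.exp (-x ^ 2 / 2))
    simp only [neg_zero] at this
    rw [← this]
    have : ∫ x in Ioi (0:ℝ), (-x) * Real.exp (-(-x) ^ 2 / 2)
        = - ∫ x in Ioi (0:ℝ), x * Real.exp (-x ^ 2 / 2) := by
      rw [← integral_neg]
      congr 1; funext x; ring_nf
    rw [show (fun x => (fun x => x * Real.exp (-x ^ 2 / 2)) (-x)) = fun x : ℝ =>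
      (-x) * Real.exp (-(-x) ^ 2 / 2) from rfl] at *
    rw [this, integral_Ioi_id_exp]
  rw [← intervalIntegral.integral_Iic_add_Ioi (b := (0:ℝ)) integrable_id_exp.integrableOn
    integrable_id_exp.integrableOn, hIic, integral_Ioi_id_exp]
  ring


theorem pi_integrable {n : ℕ} {E : Type*} [MeasurableSpace E] {μ : Measure E} [SigmaFinite μ]
    {f : Fin n → E → ℝ} (hf : ∀ i, Integrable (f i) μ) :
    Integrable (fun x : Fin n → E => ∏ i, f i (x i)) (Measure.pi fun _ => μ) := by
  induction n with
  | zero =>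
      simp only [Finset.univ_eq_empty, Finset.prod_empty, integrable_const_iff,
        one_ne_zero, false_or]
      exact ⟨by simp [Measure.pi_univ]⟩
  | succ n n_ih =>
      have := ((measurePreserving_piFinSuccAbove (fun _ : Fin (n+1) => μ) 0).symm)
      rw [← this.integrable_comp_emb (MeasurableEquiv.measurableEmbedding _)]
      simp_rw [MeasurableEquiv.piFinSuccAbove_symm_apply, Fin.insertNthEquiv,
        Fin.prod_univ_succ, Fin.insertNth_zero]
      simp only [Fin.zero_succAbove, cast_eq, Function.comp_def, Fin.cons_zero, Fin.cons_succ]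
      have : Integrable (fun (x : Fin n → E) ↦ ∏ j, f (Fin.succ j) (x j)) (Measure.pi fun _ => μ) :=
        n_ih (fun i ↦ hf _)
      exact Integrable.mul_prod (hf 0) this

theorem pi_integral {n : ℕ} {E : Type*} [MeasurableSpace E] {μ : Measure E} [SigmaFinite μ]
    (f : Fin n → E → ℝ) :
    ∫ x : Fin n → E, (∏ i, f i (x i)) ∂(Measure.pi fun _ => μ) = ∏ i, ∫ x, f i x ∂μ := by
  induction n with
  | zero =>
      simp only [Finset.univ_eq_empty, Finset.prod_empty, integral_const, smul_eq_mul, mul_one]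
      simp [Measure.real]
  | succ n n_ih =>
      calc
        _ = ∫ x : E × (Fin n → E),
            f 0 x.1 * ∏ i : Fin n, f (Fin.succ i) (x.2 i) ∂(μ.prod (Measure.pi fun _ => μ)) := by
          rw [← ((measurePreserving_piFinSuccAbove
            (fun _ : Fin (n+1) => μ) 0).symm).integral_comp']
          simp only [MeasurableEquiv.piFinSuccAbove_symm_apply, Fin.insertNthEquiv,
            Fin.prod_univ_succ, Fin.insertNth_zero, Equiv.coe_fn_mk, Fin.cons_succ,
            Fin.zero_succAbove, cast_eq, Fin.cons_zero, Function.comp_def]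
        _ = (∫ x, f 0 x ∂μ) * ∏ i : Fin n, ∫ x, f (Fin.succ i) x ∂μ := by
          rw [← n_ih fun i => f (Fin.succ i), ← integral_prod_mul]
        _ = ∏ i, ∫ x, f i x ∂μ := by rw [Fin.prod_univ_succ]


lemma int_id_g1 : Integrable (fun t : ℝ => t) (gaussianReal 0 1) := by
  rw [integrable_g1_iff (f := fun t : ℝ => t) aestronglyMeasurable_id]
  refine (integrable_id_exp.const_mul ((Real.sqrt (2 * π))⁻¹)).congr
    (ae_of_all _ fun x => ?_)
  simp only [pdf_eq]; ring

lemma int_sq_g1 : Integrable (fun t : ℝ => t * t) (gaussianReal 0 1) := by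
  rw [integrable_g1_iff (f := fun t : ℝ => t * t) ((continuous_id.mul continuous_id).aestronglyMeasurable)]
  refine (integrable_sq_exp.const_mul ((Real.sqrt (2 * π))⁻¹)).congr
    (ae_of_all _ fun x => ?_)
  simp only [pdf_eq]; ring

lemma moment1 : ∫ t, t ∂(gaussianReal 0 1) = 0 := by
  rw [integral_g1]
  have h : (fun x : ℝ => gaussianPDFReal 0 1 x * x)
      = fun x => (Real.sqrt (2 * π))⁻¹ * (x * Real.exp (-x ^ 2 / 2)) := by
    funext x; rw [pdf_eq]; ring
  rw [h, integral_const_mul, integral_id_exp_total, mul_zero]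

lemma moment2 : ∫ t, t * t ∂(gaussianReal 0 1) = 1 := by
  rw [integral_g1]
  have h : (fun x : ℝ => gaussianPDFReal 0 1 x * (x * x))
      = fun x => (Real.sqrt (2 * π))⁻¹ * (x ^ 2 * Real.exp (-x ^ 2 / 2)) := by
    funext x; rw [pdf_eq]; ring
  rw [h, integral_const_mul, integral_sq_exp_total]
  rw [inv_mul_cancel₀]
  positivity

abbrev gd (d : ℕ) : Measure (Fin d → ℝ) := Measure.pi fun _ => gaussianReal 0 1

variable {d : ℕ}

lemma coord_eq (k : Fin d) : (fun u : Fin d → ℝ => u k)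
    = fun u => ∏ m, (if m = k then u m else 1) := by
  funext u
  rw [Finset.prod_ite_eq' Finset.univ k (fun m => u m)]
  simp

lemma coord2_eq (k l : Fin d) : (fun u : Fin d → ℝ => u k * u l)
    = fun u => ∏ m, ((if m = k then u m else 1) * (if m = l then u m else 1)) := by
  funext u
  rw [Finset.prod_mul_distrib, Finset.prod_ite_eq' Finset.univ k (fun m => u m),
    Finset.prod_ite_eq' Finset.univ l (fun m => u m)]
  simp

lemma integrable_coord (k : Fin d) : Integrable (fun u : Fin d → ℝ => u k) (gd d) := by
  rw [coord_eq]
  refine pi_integrable (μ := gaussianReal 0 1)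
    (f := fun m (t : ℝ) => if m = k then t else 1) fun m => ?_
  by_cases h : m = k <;> simp only [h, if_true, if_false, eq_self_iff_true]
  · exact int_id_g1
  · exact integrable_const 1

lemma integrable_coord2 (k l : Fin d) :
    Integrable (fun u : Fin d → ℝ => u k * u l) (gd d) := by
  rw [coord2_eq]
  refine pi_integrable (μ := gaussianReal 0 1)
    (f := fun m (t : ℝ) => (if m = k then t else 1) * (if m = l then t else 1)) fun m => ?_
  by_cases h1 : m = k <;> by_cases h2 : m = l
  · simp only [if_pos h1, if_pos h2]; exact int_sq_g1
  · simp only [if_pos h1, if_neg h2, mul_one]; exact int_id_g1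
  · simp only [if_neg h1, if_pos h2, one_mul]; exact int_id_g1
  · simp only [if_neg h1, if_neg h2, mul_one]; exact integrable_const 1

lemma integral_coord (k : Fin d) : ∫ u, u k ∂(gd d) = 0 := by
  rw [coord_eq]
  have h := pi_integral (μ := gaussianReal 0 1) (fun m (t : ℝ) => if m = k then t else 1)
  rw [h]
  refine Finset.prod_eq_zero (Finset.mem_univ k) ?_
  simp [moment1]

lemma integral_coord2 (k l : Fin d) :
    ∫ u, u k * u l ∂(gd d) = if k = l then 1 else 0 := by
  rw [coord2_eq]
  have h := pi_integral (μ := gaussianReal 0 1)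
    (fun m (t : ℝ) => (if m = k then t else 1) * (if m = l then t else 1))
  rw [h]
  by_cases hkl : k = l
  · subst hkl
    rw [if_pos rfl]
    refine Finset.prod_eq_one fun m _ => ?_
    by_cases h : m = k <;> simp [h, moment2]
  · rw [if_neg hkl]
    refine Finset.prod_eq_zero (Finset.mem_univ k) ?_
    simp [hkl, moment1]

lemma LL_eq (a b : Fin d → ℝ) :
    (fun u : Fin d → ℝ => (∑ k, a k * u k) * (∑ l, b l * u l))
      = fun u => ∑ k, ∑ l, (a k * b l) * (u k * u l) := by
  funext u
  rw [Finset.sum_mul_sum]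
  refine Finset.sum_congr rfl fun k _ => Finset.sum_congr rfl fun l _ => by ring

lemma integrable_L (a : Fin d → ℝ) :
    Integrable (fun u : Fin d → ℝ => ∑ k, a k * u k) (gd d) :=
  integrable_finset_sum _ fun k _ => (integrable_coord k).const_mul (a k)

lemma integrable_LL (a b : Fin d → ℝ) :
    Integrable (fun u : Fin d → ℝ => (∑ k, a k * u k) * (∑ l, b l * u l)) (gd d) := by
  rw [LL_eq]
  exact integrable_finset_sum _ fun k _ => integrable_finset_sum _ fun l _ =>
    (integrable_coord2 k l).const_mul _

lemma integral_L (a : Fin d → ℝ) : ∫ u, ∑ k, a k * u k ∂(gd d) = 0 := by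
  rw [integral_finset_sum _ fun k _ => (integrable_coord k).const_mul (a k)]
  simp [integral_const_mul, integral_coord]

lemma integral_LL (a b : Fin d → ℝ) :
    ∫ u, (∑ k, a k * u k) * (∑ l, b l * u l) ∂(gd d) = ∑ k, a k * b k := by
  rw [LL_eq, integral_finset_sum _ fun k _ =>
    integrable_finset_sum _ fun l _ => (integrable_coord2 k l).const_mul _]
  have h : ∀ k : Fin d, ∫ u, (∑ l, (a k * b l) * (u k * u l)) ∂(gd d) = a k * b k := by
    intro k
    rw [integral_finset_sum _ fun l _ => (integrable_coord2 k l).const_mul _]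
    simp only [integral_const_mul, integral_coord2]
    simp [Finset.sum_ite_eq, mul_ite]
  exact Finset.sum_congr rfl fun k _ => h k

variable {D : ℕ}

abbrev gD (d D : ℕ) : Measure (Fin D → Fin d → ℝ) := Measure.pi fun _ => gd d

def Ffun (a b a' b' : Fin D) (al be al' be' : Fin d → ℝ) : Fin D → (Fin d → ℝ) → ℝ :=
  fun m u => ((if m = a then ∑ k, al k * u k else 1) * (if m = b then ∑ k, be k * u k else 1)) *
    ((if m = a' then ∑ k, al' k * u k else 1) * (if m = b' then ∑ k, be' k * u k else 1))

lemma four_eq (a b a' b' : Fin D) (al be al' be' : Fin d → ℝ) :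
    (fun x : Fin D → Fin d → ℝ =>
      ((∑ k, al k * x a k) * (∑ k, be k * x b k)) *
        ((∑ k, al' k * x a' k) * (∑ k, be' k * x b' k)))
      = fun x => ∏ m, Ffun a b a' b' al be al' be' m (x m) := by
  funext x
  unfold Ffun
  rw [Finset.prod_mul_distrib, Finset.prod_mul_distrib, Finset.prod_mul_distrib,
    Finset.prod_ite_eq' Finset.univ a (fun m => ∑ k, al k * x m k),
    Finset.prod_ite_eq' Finset.univ b (fun m => ∑ k, be k * x m k),
    Finset.prod_ite_eq' Finset.univ a' (fun m => ∑ k, al' k * x m k),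
    Finset.prod_ite_eq' Finset.univ b' (fun m => ∑ k, be' k * x m k)]
  simp

lemma integrable_Ffun {a b a' b' : Fin D} (hab : a ≠ b) (ha'b' : a' ≠ b')
    (al be al' be' : Fin d → ℝ) (m : Fin D) :
    Integrable (Ffun a b a' b' al be al' be' m) (gd d) := by
  unfold Ffun
  by_cases h1 : m = a <;> by_cases h2 : m = b <;> by_cases h3 : m = a' <;> by_cases h4 : m = b'
  all_goals try exact absurd (h1.symm.trans h2) hab
  all_goals try exact absurd (h3.symm.trans h4) ha'b'
  · simp only [if_pos h1, if_neg h2, if_pos h3, if_neg h4, mul_one, one_mul]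
    exact integrable_LL _ _
  · simp only [if_pos h1, if_neg h2, if_neg h3, if_pos h4, mul_one, one_mul]
    exact integrable_LL _ _
  · simp only [if_pos h1, if_neg h2, if_neg h3, if_neg h4, mul_one, one_mul]
    exact integrable_L _
  · simp only [if_neg h1, if_pos h2, if_pos h3, if_neg h4, mul_one, one_mul]
    exact integrable_LL _ _
  · simp only [if_neg h1, if_pos h2, if_neg h3, if_pos h4, mul_one, one_mul]
    exact integrable_LL _ _
  · simp only [if_neg h1, if_pos h2, if_neg h3, if_neg h4, mul_one, one_mul]
    exact integrable_L _
  · simp only [if_neg h1, if_neg h2, if_pos h3, if_neg h4, mul_one, one_mul]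
    exact integrable_L _
  · simp only [if_neg h1, if_neg h2, if_neg h3, if_pos h4, mul_one, one_mul]
    exact integrable_L _
  · simp only [if_neg h1, if_neg h2, if_neg h3, if_neg h4, mul_one, one_mul]
    exact integrable_const 1

lemma integrable_four {a b a' b' : Fin D} (hab : a ≠ b) (ha'b' : a' ≠ b')
    (al be al' be' : Fin d → ℝ) :
    Integrable (fun x : Fin D → Fin d → ℝ =>
      ((∑ k, al k * x a k) * (∑ k, be k * x b k)) *
        ((∑ k, al' k * x a' k) * (∑ k, be' k * x b' k))) (gD d D) := by
  rw [four_eq]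
  exact pi_integrable (μ := gd d) (f := Ffun a b a' b' al be al' be')
    (integrable_Ffun hab ha'b' al be al' be')

lemma prob_int_one : ∫ _u : Fin d → ℝ, (1:ℝ) ∂(gd d) = 1 := by
  rw [integral_const]; simp

lemma integral_four {a b a' b' : Fin D} (hab : a ≠ b) (ha'b' : a' ≠ b')
    (al be al' be' : Fin d → ℝ) :
    ∫ x, ((∑ k, al k * x a k) * (∑ k, be k * x b k)) *
        ((∑ k, al' k * x a' k) * (∑ k, be' k * x b' k)) ∂(gD d D)
    = (if a = a' ∧ b = b' then (∑ k, al k * al' k) * (∑ k, be k * be' k) else 0)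
      + (if a = b' ∧ b = a' then (∑ k, al k * be' k) * (∑ k, be k * al' k) else 0) := by
  rw [four_eq]
  have hpi := pi_integral (μ := gd d) (Ffun a b a' b' al be al' be')
  rw [hpi]
  by_cases hA : a = a' ∧ b = b'
  · obtain ⟨h1, h2⟩ := hA
    have hfac : ∀ m : Fin D, ∫ u, Ffun a b a' b' al be al' be' m u ∂(gd d)
        = (if m = a then (∑ k, al k * al' k) else 1) *
          (if m = b then (∑ k, be k * be' k) else 1) := by
      intro m
      unfold Ffun
      by_cases hm1 : m = a <;> by_cases hm2 : m = b
      · exact absurd (hm1.symm.trans hm2) hab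
      · simp only [if_pos hm1, if_neg hm2, if_pos (hm1.trans h1),
          if_neg (show ¬ m = b' from fun h => hm2 (h.trans h2.symm)), mul_one, one_mul]
        exact integral_LL al al'
      · simp only [if_neg hm1, if_pos hm2, if_pos (hm2.trans h2),
          if_neg (show ¬ m = a' from fun h => hm1 (h.trans h1.symm)), mul_one, one_mul]
        exact integral_LL be be'
      · simp only [if_neg hm1, if_neg hm2,
          if_neg (show ¬ m = a' from fun h => hm1 (h.trans h1.symm)),
          if_neg (show ¬ m = b' from fun h => hm2 (h.trans h2.symm)), mul_one, one_mul]
        exact prob_int_one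
    rw [Finset.prod_congr rfl (fun m _ => hfac m), Finset.prod_mul_distrib,
      Finset.prod_ite_eq' Finset.univ a (fun _ => ∑ k, al k * al' k),
      Finset.prod_ite_eq' Finset.univ b (fun _ => ∑ k, be k * be' k)]
    rw [if_pos (Finset.mem_univ a), if_pos (Finset.mem_univ b),
      if_pos (show a = a' ∧ b = b' from ⟨h1, h2⟩), if_neg (show ¬ (a = b' ∧ b = a') from
        fun h => hab (h.1.trans h2.symm)), add_zero]
  · by_cases hB : a = b' ∧ b = a'
    · obtain ⟨h1, h2⟩ := hB
      have hfac : ∀ m : Fin D, ∫ u, Ffun a b a' b' al be al' be' m u ∂(gd d)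
          = (if m = a then (∑ k, al k * be' k) else 1) *
            (if m = b then (∑ k, be k * al' k) else 1) := by
        intro m
        unfold Ffun
        by_cases hm1 : m = a <;> by_cases hm2 : m = b
        · exact absurd (hm1.symm.trans hm2) hab
        · simp only [if_pos hm1, if_neg hm2, if_pos (hm1.trans h1),
            if_neg (show ¬ m = a' from fun h => hm2 (h.trans h2.symm)), mul_one, one_mul]
          exact integral_LL al be'
        · simp only [if_neg hm1, if_pos hm2, if_pos (hm2.trans h2),
            if_neg (show ¬ m = b' from fun h => hm1 (h.trans h1.symm)), mul_one, one_mul]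
          exact integral_LL be al'
        · simp only [if_neg hm1, if_neg hm2,
            if_neg (show ¬ m = a' from fun h => hm2 (h.trans h2.symm)),
            if_neg (show ¬ m = b' from fun h => hm1 (h.trans h1.symm)), mul_one, one_mul]
          exact prob_int_one
      rw [Finset.prod_congr rfl (fun m _ => hfac m), Finset.prod_mul_distrib,
        Finset.prod_ite_eq' Finset.univ a (fun _ => ∑ k, al k * be' k),
        Finset.prod_ite_eq' Finset.univ b (fun _ => ∑ k, be k * al' k)]
      rw [if_pos (Finset.mem_univ a), if_pos (Finset.mem_univ b),
        if_neg hA, if_pos (show a = b' ∧ b = a' from ⟨h1, h2⟩), zero_add]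
    · rw [if_neg hA, if_neg hB, add_zero]
      by_cases h1 : a = a'
      · have hbb' : ¬ b = b' := fun h => hA ⟨h1, h⟩
        have hba' : ¬ b = a' := fun h => (Ne.symm hab) (h.trans h1.symm)
        refine Finset.prod_eq_zero (Finset.mem_univ b) ?_
        unfold Ffun
        simp only [if_neg (show ¬ b = a from Ne.symm hab), if_pos rfl, if_neg hba',
          if_neg hbb', mul_one, one_mul]
        exact integral_L be
      · by_cases h2 : a = b'
        · have hba' : ¬ b = a' := fun h => hB ⟨h2, h⟩
          have hbb' : ¬ b = b' := fun h => (Ne.symm hab) (h.trans h2.symm)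
          refine Finset.prod_eq_zero (Finset.mem_univ b) ?_
          unfold Ffun
          simp only [if_neg (show ¬ b = a from Ne.symm hab), if_pos rfl, if_neg hba',
            if_neg hbb', mul_one, one_mul]
          exact integral_L be
        · refine Finset.prod_eq_zero (Finset.mem_univ a) ?_
          unfold Ffun
          simp only [if_pos rfl, if_neg hab, if_neg h1, if_neg h2, mul_one, one_mul]
          exact integral_L al

def ev {d : ℕ} (k : Fin d) : Fin d → ℝ := fun m => if m = k then 1 else 0

lemma ev_sum (k : Fin d) (v : Fin d → ℝ) : (∑ m, ev k m * v m) = v k := by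
  simp [ev, ite_mul, Finset.sum_ite_eq']

lemma ev_dot (k k' : Fin d) : (∑ m, ev k m * ev k' m) = if k = k' then 1 else 0 := by
  rw [ev_sum]; rfl

lemma dot_ev (θ : Fin d → ℝ) (k : Fin d) : (∑ m, θ m * ev k m) = θ k := by
  simp [ev, mul_ite, Finset.sum_ite_eq']

lemma BB_expand (i j i' j' : Fin D) (θ : Fin d → ℝ) :
    (fun p : (Fin D → Fin d → ℝ) × (Fin d → ℝ) =>
      ((∑ k, θ k * p.1 i k) * (∑ k, p.1 j k * p.2 k)) *
        ((∑ k, θ k * p.1 i' k) * (∑ k, p.1 j' k * p.2 k)))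
    = fun p => ∑ k : Fin d, ∑ k' : Fin d,
        (((∑ m, θ m * p.1 i m) * (∑ m, ev k m * p.1 j m)) *
          ((∑ m, θ m * p.1 i' m) * (∑ m, ev k' m * p.1 j' m))) * (p.2 k * p.2 k') := by
  funext p
  have h1 : (∑ k, θ k * p.1 i k) * (∑ k, p.1 j k * p.2 k)
      = ∑ k, ((∑ m, θ m * p.1 i m) * (p.1 j k * p.2 k)) := Finset.mul_sum _ _ _
  have h2 : (∑ k, θ k * p.1 i' k) * (∑ k, p.1 j' k * p.2 k)
      = ∑ k, ((∑ m, θ m * p.1 i' m) * (p.1 j' k * p.2 k)) := Finset.mul_sum _ _ _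
  rw [h1, h2, Finset.sum_mul_sum]
  refine Finset.sum_congr rfl fun k _ => Finset.sum_congr rfl fun k' _ => ?_
  rw [ev_sum, ev_sum]
  ring

lemma integrable_cross {i j i' j' : Fin D} (hij : i ≠ j) (hi'j' : i' ≠ j') (θ : Fin d → ℝ) :
    Integrable (fun p : (Fin D → Fin d → ℝ) × (Fin d → ℝ) =>
      ((∑ k, θ k * p.1 i k) * (∑ k, p.1 j k * p.2 k)) *
        ((∑ k, θ k * p.1 i' k) * (∑ k, p.1 j' k * p.2 k))) ((gD d D).prod (gd d)) := by
  rw [BB_expand]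
  refine integrable_finset_sum _ fun k _ => integrable_finset_sum _ fun k' _ => ?_
  exact (integrable_four hij hi'j' θ (ev k) θ (ev k')).mul_prod (integrable_coord2 k k')

lemma integral_cross {i j i' j' : Fin D} (hij : i ≠ j) (hi'j' : i' ≠ j') (θ : Fin d → ℝ) :
    ∫ p : (Fin D → Fin d → ℝ) × (Fin d → ℝ),
      ((∑ k, θ k * p.1 i k) * (∑ k, p.1 j k * p.2 k)) *
        ((∑ k, θ k * p.1 i' k) * (∑ k, p.1 j' k * p.2 k)) ∂((gD d D).prod (gd d))
    = (if i = i' ∧ j = j' then (d:ℝ) * (∑ m, θ m * θ m) else 0)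
      + (if i = j' ∧ j = i' then (∑ m, θ m * θ m) else 0) := by
  rw [BB_expand]
  rw [integral_finset_sum _ (fun k _ => integrable_finset_sum _ fun k' _ =>
    ((integrable_four hij hi'j' θ (ev k) θ (ev k')).mul_prod (integrable_coord2 k k')))]
  have hterm : ∀ k : Fin d, ∫ p : (Fin D → Fin d → ℝ) × (Fin d → ℝ),
      (∑ k' : Fin d, (((∑ m, θ m * p.1 i m) * (∑ m, ev k m * p.1 j m)) *
          ((∑ m, θ m * p.1 i' m) * (∑ m, ev k' m * p.1 j' m))) * (p.2 k * p.2 k'))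
        ∂((gD d D).prod (gd d))
      = (if i = i' ∧ j = j' then (∑ m, θ m * θ m) else 0)
        + (if i = j' ∧ j = i' then θ k * θ k else 0) := by
    intro k
    rw [integral_finset_sum _ (fun k' _ =>
      ((integrable_four hij hi'j' θ (ev k) θ (ev k')).mul_prod (integrable_coord2 k k')))]
    have hkk' : ∀ k' : Fin d, ∫ p : (Fin D → Fin d → ℝ) × (Fin d → ℝ),
        (((∑ m, θ m * p.1 i m) * (∑ m, ev k m * p.1 j m)) *
          ((∑ m, θ m * p.1 i' m) * (∑ m, ev k' m * p.1 j' m))) * (p.2 k * p.2 k')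
          ∂((gD d D).prod (gd d))
        = ((if i = i' ∧ j = j' then (∑ m, θ m * θ m) * (if k = k' then 1 else 0) else 0)
            + (if i = j' ∧ j = i' then θ k' * θ k else 0)) * (if k = k' then 1 else 0) := by
      intro k'
      rw [integral_prod_mul (f := fun x : Fin D → Fin d → ℝ =>
          ((∑ m, θ m * x i m) * (∑ m, ev k m * x j m)) *
            ((∑ m, θ m * x i' m) * (∑ m, ev k' m * x j' m)))
        (g := fun q : Fin d → ℝ => q k * q k')]
      rw [integral_four hij hi'j' θ (ev k) θ (ev k'), integral_coord2, ev_dot, dot_ev, ev_sum]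
    rw [Finset.sum_congr rfl fun k' _ => hkk' k']
    have hsplit : ∀ k' : Fin d,
        ((if i = i' ∧ j = j' then (∑ m, θ m * θ m) * (if k = k' then 1 else 0) else 0)
            + (if i = j' ∧ j = i' then θ k' * θ k else 0)) * (if k = k' then 1 else 0)
        = if k = k' then ((if i = i' ∧ j = j' then (∑ m, θ m * θ m) else 0)
            + (if i = j' ∧ j = i' then θ k' * θ k else 0)) else 0 := by
      intro k'
      by_cases h : k = k' <;> simp [h]
    rw [Finset.sum_congr rfl fun k' _ => hsplit k', Finset.sum_ite_eq]
    simp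
  rw [Finset.sum_congr rfl fun k _ => hterm k, Finset.sum_add_distrib]
  congr 1
  · by_cases hA : i = i' ∧ j = j' <;>
      simp [hA, Finset.sum_const, Finset.card_univ, nsmul_eq_mul]
  · by_cases hB : i = j' ∧ j = i' <;> simp [hB]

def F2 (a b : Fin D) (al be : Fin d → ℝ) : Fin D → (Fin d → ℝ) → ℝ :=
  fun m u => (if m = a then ∑ k, al k * u k else 1) * (if m = b then ∑ k, be k * u k else 1)

lemma two_eq (a b : Fin D) (al be : Fin d → ℝ) :
    (fun x : Fin D → Fin d → ℝ => (∑ k, al k * x a k) * (∑ k, be k * x b k))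
      = fun x => ∏ m, F2 a b al be m (x m) := by
  funext x
  unfold F2
  rw [Finset.prod_mul_distrib,
    Finset.prod_ite_eq' Finset.univ a (fun m => ∑ k, al k * x m k),
    Finset.prod_ite_eq' Finset.univ b (fun m => ∑ k, be k * x m k)]
  simp

lemma integrable_two (a b : Fin D) (al be : Fin d → ℝ) :
    Integrable (fun x : Fin D → Fin d → ℝ =>
      (∑ k, al k * x a k) * (∑ k, be k * x b k)) (gD d D) := by
  rw [two_eq]
  refine pi_integrable (μ := gd d) (f := F2 a b al be) fun m => ?_
  unfold F2
  by_cases h1 : m = a <;> by_cases h2 : m = b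
  · simp only [if_pos h1, if_pos h2]; exact integrable_LL _ _
  · simp only [if_pos h1, if_neg h2, mul_one]; exact integrable_L _
  · simp only [if_neg h1, if_pos h2, one_mul]; exact integrable_L _
  · simp only [if_neg h1, if_neg h2, mul_one]; exact integrable_const 1

lemma AB_expand (i j : Fin D) (θ : Fin d → ℝ) :
    (fun p : (Fin D → Fin d → ℝ) × (Fin d → ℝ) =>
      (∑ k, θ k * p.1 i k) * (∑ k, p.1 j k * p.2 k))
    = fun p => ∑ k : Fin d,
        ((∑ m, θ m * p.1 i m) * (∑ m, ev k m * p.1 j m)) * p.2 k := by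
  funext p
  rw [Finset.mul_sum]
  refine Finset.sum_congr rfl fun k _ => ?_
  rw [ev_sum]
  ring

lemma integrable_AB (i j : Fin D) (θ : Fin d → ℝ) :
    Integrable (fun p : (Fin D → Fin d → ℝ) × (Fin d → ℝ) =>
      (∑ k, θ k * p.1 i k) * (∑ k, p.1 j k * p.2 k)) ((gD d D).prod (gd d)) := by
  rw [AB_expand]
  exact integrable_finset_sum _ fun k _ =>
    (integrable_two i j θ (ev k)).mul_prod (integrable_coord k)

lemma integral_AB (i j : Fin D) (θ : Fin d → ℝ) :
    ∫ p : (Fin D → Fin d → ℝ) × (Fin d → ℝ),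
      (∑ k, θ k * p.1 i k) * (∑ k, p.1 j k * p.2 k) ∂((gD d D).prod (gd d)) = 0 := by
  rw [AB_expand]
  rw [integral_finset_sum _ (fun k _ =>
    (integrable_two i j θ (ev k)).mul_prod (integrable_coord k))]
  refine Finset.sum_eq_zero fun k _ => ?_
  rw [integral_prod_mul (f := fun x : Fin D → Fin d → ℝ =>
      (∑ m, θ m * x i m) * (∑ m, ev k m * x j m))
    (g := fun q : Fin d → ℝ => q k), integral_coord, mul_zero]

def Tm (w : Fin D → Fin D → ℝ) (θ : Fin d → ℝ) (i j : Fin D) :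
    ((Fin D → Fin d → ℝ) × (Fin d → ℝ)) → ℝ :=
  fun p => if i ≠ j then w i j * (∑ k, θ k * p.1 i k) * (∑ k, p.1 j k * p.2 k) else 0

lemma integrable_Tm (w : Fin D → Fin D → ℝ) (θ : Fin d → ℝ) (i j : Fin D) :
    Integrable (Tm w θ i j) ((gD d D).prod (gd d)) := by
  unfold Tm
  by_cases hij : i ≠ j
  · simp only [if_pos hij]
    exact ((integrable_AB i j θ).const_mul (w i j)).congr (ae_of_all _ fun p => by ring)
  · simp only [if_neg hij]
    exact integrable_const 0

lemma mean_zero (w : Fin D → Fin D → ℝ) (θ : Fin d → ℝ) :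
    ∫ p : (Fin D → Fin d → ℝ) × (Fin d → ℝ),
      (∑ i : Fin D, ∑ j : Fin D, if i ≠ j then
        w i j * (∑ k, θ k * p.1 i k) * (∑ k, p.1 j k * p.2 k) else 0)
      ∂((gD d D).prod (gd d)) = 0 := by
  rw [show (fun p : (Fin D → Fin d → ℝ) × (Fin d → ℝ) =>
      (∑ i : Fin D, ∑ j : Fin D, if i ≠ j then
        w i j * (∑ k, θ k * p.1 i k) * (∑ k, p.1 j k * p.2 k) else 0))
    = fun p => ∑ i : Fin D, ∑ j : Fin D, Tm w θ i j p from rfl]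
  rw [integral_finset_sum _ (fun i _ => integrable_finset_sum _ fun j _ =>
    integrable_Tm w θ i j)]
  refine Finset.sum_eq_zero fun i _ => ?_
  rw [integral_finset_sum _ (fun j _ => integrable_Tm w θ i j)]
  refine Finset.sum_eq_zero fun j _ => ?_
  unfold Tm
  by_cases hij : i ≠ j
  · simp only [if_pos hij]
    have h : (fun p : (Fin D → Fin d → ℝ) × (Fin d → ℝ) =>
        w i j * (∑ k, θ k * p.1 i k) * (∑ k, p.1 j k * p.2 k))
        = fun p => w i j * ((∑ k, θ k * p.1 i k) * (∑ k, p.1 j k * p.2 k)) := by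
      funext p; ring
    rw [h, integral_const_mul, integral_AB, mul_zero]
  · simp only [if_neg hij, integral_zero]

lemma integrable_TT (w : Fin D → Fin D → ℝ) (θ : Fin d → ℝ) (i j i' j' : Fin D) :
    Integrable (fun p => Tm w θ i j p * Tm w θ i' j' p) ((gD d D).prod (gd d)) := by
  unfold Tm
  by_cases hij : i ≠ j
  · by_cases hi'j' : i' ≠ j'
    · simp only [if_pos hij, if_pos hi'j']
      exact ((integrable_cross hij hi'j' θ).const_mul (w i j * w i' j')).congr
        (ae_of_all _ fun p => by ring)
    · simp only [if_neg hi'j', mul_zero]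
      exact integrable_const 0
  · simp only [if_neg hij, zero_mul]
    exact integrable_const 0

lemma integral_TT (w : Fin D → Fin D → ℝ) (θ : Fin d → ℝ) (i j i' j' : Fin D) :
    ∫ p, Tm w θ i j p * Tm w θ i' j' p ∂((gD d D).prod (gd d))
    = if i ≠ j ∧ i' ≠ j' then w i j * w i' j' *
        ((if i = i' ∧ j = j' then (d:ℝ) * (∑ m, θ m * θ m) else 0)
          + (if i = j' ∧ j = i' then (∑ m, θ m * θ m) else 0)) else 0 := by
  unfold Tm
  by_cases hij : i ≠ j
  · by_cases hi'j' : i' ≠ j'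
    · simp only [if_pos hij, if_pos hi'j']
      have h : (fun p : (Fin D → Fin d → ℝ) × (Fin d → ℝ) =>
          w i j * (∑ k, θ k * p.1 i k) * (∑ k, p.1 j k * p.2 k) *
            (w i' j' * (∑ k, θ k * p.1 i' k) * (∑ k, p.1 j' k * p.2 k)))
          = fun p => (w i j * w i' j') *
            (((∑ k, θ k * p.1 i k) * (∑ k, p.1 j k * p.2 k)) *
              ((∑ k, θ k * p.1 i' k) * (∑ k, p.1 j' k * p.2 k))) := by
        funext p; ring
      rw [h, integral_const_mul, integral_cross hij hi'j' θ,
        if_pos (show i ≠ j ∧ i' ≠ j' from ⟨hij, hi'j'⟩)]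
    · simp only [if_neg hi'j', mul_zero, integral_zero]
      rw [if_neg (fun h => hi'j' h.2)]
  · simp only [if_neg hij, zero_mul, integral_zero]
    rw [if_neg (fun h => hij h.1)]

lemma collapse (w : Fin D → Fin D → ℝ) (c1 c2 : ℝ) :
    (∑ i, ∑ i', ∑ j, ∑ j', (if i ≠ j ∧ i' ≠ j' then w i j * w i' j' *
        ((if i = i' ∧ j = j' then c1 else 0) + (if i = j' ∧ j = i' then c2 else 0)) else 0))
    = ∑ i, ∑ j, (if i ≠ j then w i j * w i j * c1 + w i j * w j i * c2 else 0) := by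
  refine Finset.sum_congr rfl fun i _ => ?_
  rw [Finset.sum_comm]
  refine Finset.sum_congr rfl fun j _ => ?_
  by_cases hij : i ≠ j
  · rw [if_pos hij]
    have hterm : ∀ i' j' : Fin D, (if i ≠ j ∧ i' ≠ j' then w i j * w i' j' *
          ((if i = i' ∧ j = j' then c1 else 0) + (if i = j' ∧ j = i' then c2 else 0)) else 0)
        = (if i' = i ∧ j' = j then w i j * w i j * c1 else 0)
          + (if i' = j ∧ j' = i then w i j * w j i * c2 else 0) := by
      intro i' j'
      by_cases hA : i' = i ∧ j' = j
      · obtain ⟨h1, h2⟩ := hA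
        simp only [h1, h2]
        simp [hij]
      · by_cases hB : i' = j ∧ j' = i
        · obtain ⟨h1, h2⟩ := hB
          simp only [h1, h2]
          simp [hij, Ne.symm hij]
        · have e1 : ¬ (i = i' ∧ j = j') := fun h => hA ⟨h.1.symm, h.2.symm⟩
          have e2 : ¬ (i = j' ∧ j = i') := fun h => hB ⟨h.2.symm, h.1.symm⟩
          rw [if_neg hA, if_neg hB, if_neg e1, if_neg e2]
          simp
    rw [Finset.sum_congr rfl fun i' _ => Finset.sum_congr rfl fun j' _ => hterm i' j']
    rw [Finset.sum_congr rfl fun i' (_ : i' ∈ Finset.univ) => Finset.sum_add_distrib,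
      Finset.sum_add_distrib]
    congr 1
    · have h1 : ∀ i' : Fin D, (∑ j' : Fin D, if i' = i ∧ j' = j then w i j * w i j * c1 else 0)
          = if i' = i then w i j * w i j * c1 else 0 := by
        intro i'
        by_cases h : i' = i
        · simp [h, Finset.sum_ite_eq']
        · simp [h]
      rw [Finset.sum_congr rfl fun i' _ => h1 i', Finset.sum_ite_eq']
      simp
    · have h2 : ∀ i' : Fin D, (∑ j' : Fin D, if i' = j ∧ j' = i then w i j * w j i * c2 else 0)
          = if i' = j then w i j * w j i * c2 else 0 := by
        intro i'
        by_cases h : i' = j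
        · simp [h, Finset.sum_ite_eq']
        · simp [h]
      rw [Finset.sum_congr rfl fun i' _ => h2 i', Finset.sum_ite_eq']
      simp
  · rw [if_neg hij]
    refine Finset.sum_eq_zero fun i' _ => Finset.sum_eq_zero fun j' _ => ?_
    rw [if_neg (fun h => hij h.1)]

lemma sq_value (w : Fin D → Fin D → ℝ) (θ : Fin d → ℝ) :
    ∫ p : (Fin D → Fin d → ℝ) × (Fin d → ℝ),
      (∑ i : Fin D, ∑ j : Fin D, if i ≠ j then
        w i j * (∑ k, θ k * p.1 i k) * (∑ k, p.1 j k * p.2 k) else 0) ^ 2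
      ∂((gD d D).prod (gd d))
    = ∑ i, ∑ j, (if i ≠ j then w i j * w i j * ((d:ℝ) * (∑ m, θ m * θ m))
        + w i j * w j i * (∑ m, θ m * θ m) else 0) := by
  have hsq : (fun p : (Fin D → Fin d → ℝ) × (Fin d → ℝ) =>
      (∑ i : Fin D, ∑ j : Fin D, if i ≠ j then
        w i j * (∑ k, θ k * p.1 i k) * (∑ k, p.1 j k * p.2 k) else 0) ^ 2)
      = fun p => ∑ i : Fin D, ∑ i' : Fin D, ∑ j : Fin D, ∑ j' : Fin D,
          Tm w θ i j p * Tm w θ i' j' p := by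
    funext p
    rw [show (∑ i : Fin D, ∑ j : Fin D, if i ≠ j then
        w i j * (∑ k, θ k * p.1 i k) * (∑ k, p.1 j k * p.2 k) else 0)
      = ∑ i : Fin D, ∑ j : Fin D, Tm w θ i j p from rfl]
    rw [sq, Finset.sum_mul_sum]
    exact Finset.sum_congr rfl fun i _ => Finset.sum_congr rfl fun i' _ =>
      Finset.sum_mul_sum _ _ _ _
  rw [hsq]
  rw [integral_finset_sum _ (fun i _ => integrable_finset_sum _ fun i' _ =>
    integrable_finset_sum _ fun j _ => integrable_finset_sum _ fun j' _ =>
    integrable_TT w θ i j i' j')]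
  rw [Finset.sum_congr rfl fun i (_ : i ∈ Finset.univ) =>
    integral_finset_sum _ (fun i' _ => integrable_finset_sum _ fun j _ =>
      integrable_finset_sum _ fun j' _ => integrable_TT w θ i j i' j')]
  rw [Finset.sum_congr rfl fun i (_ : i ∈ Finset.univ) =>
    Finset.sum_congr rfl fun i' (_ : i' ∈ Finset.univ) =>
    integral_finset_sum _ (fun j _ => integrable_finset_sum _ fun j' _ =>
      integrable_TT w θ i j i' j')]
  rw [Finset.sum_congr rfl fun i (_ : i ∈ Finset.univ) =>
    Finset.sum_congr rfl fun i' (_ : i' ∈ Finset.univ) =>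
    Finset.sum_congr rfl fun j (_ : j ∈ Finset.univ) =>
    integral_finset_sum _ (fun j' _ => integrable_TT w θ i j i' j')]
  rw [Finset.sum_congr rfl fun i (_ : i ∈ Finset.univ) =>
    Finset.sum_congr rfl fun i' (_ : i' ∈ Finset.univ) =>
    Finset.sum_congr rfl fun j (_ : j ∈ Finset.univ) =>
    Finset.sum_congr rfl fun j' (_ : j' ∈ Finset.univ) =>
    integral_TT w θ i j i' j']
  exact collapse w ((d:ℝ) * (∑ m, θ m * θ m)) (∑ m, θ m * θ m)

def Bq (D : ℕ) (i j : Fin D) : ℝ :=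
  4 / (((((i:ℕ)+(j:ℕ)) : ℕ) : ℝ) * (((((i:ℕ)+(j:ℕ)) : ℕ) : ℝ) + 1))

lemma term_bound {D : ℕ} (d : ℕ) (hd : 1 ≤ d) (S : ℝ) (hS0 : 0 ≤ S) (hS1 : S ≤ 1)
    (w : Fin D → Fin D → ℝ)
    (hw : ∀ i j : Fin D, |w i j| ≤
      2 / (2 * (min (i : ℕ) (j : ℕ) + 1 : ℝ) + (max (i : ℕ) (j : ℕ) + 1 : ℝ) - 2))
    (i j : Fin D) (hij : i ≠ j) :
    w i j * w i j * ((d:ℝ) * S) + w i j * w j i * S ≤ 2 * (d:ℝ) * Bq D i j := by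
  have hvne : (i:ℕ) ≠ (j:ℕ) := fun h => hij (Fin.val_injective h)
  have hn1 : 1 ≤ (i:ℕ) + (j:ℕ) := by omega
  have ht1 : (1:ℝ) ≤ (((i:ℕ)+(j:ℕ) : ℕ) : ℝ) := by exact_mod_cast hn1
  set t : ℝ := (((i:ℕ)+(j:ℕ) : ℕ) : ℝ) with htdef
  set q : ℝ := 2 * (min (i : ℕ) (j : ℕ) + 1 : ℝ) + (max (i : ℕ) (j : ℕ) + 1 : ℝ) - 2 with hqdef
  have hq_ge : t + 1 ≤ q := by
    rw [hqdef, htdef]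
    push_cast
    have h := min_add_max ((i:ℕ):ℝ) ((j:ℕ):ℝ)
    have h0 : (0:ℝ) ≤ min ((i:ℕ):ℝ) ((j:ℕ):ℝ) :=
      le_min (Nat.cast_nonneg _) (Nat.cast_nonneg _)
    linarith
  have hq_pos : 0 < q := by linarith
  have hb : |w i j| ≤ 2 / q := hw i j
  have hb' : |w j i| ≤ 2 / q := by
    have h := hw j i
    rw [min_comm (j:ℕ) (i:ℕ), max_comm (j:ℕ) (i:ℕ)] at h
    exact h
  have hwwij : w i j * w i j ≤ (2/q) * (2/q) := by
    rw [← abs_mul_abs_self]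
    exact mul_le_mul hb hb (abs_nonneg _) (by positivity)
  have hwwji : w i j * w j i ≤ (2/q) * (2/q) :=
    calc w i j * w j i ≤ |w i j * w j i| := le_abs_self _
      _ = |w i j| * |w j i| := abs_mul _ _
      _ ≤ (2/q) * (2/q) := mul_le_mul hb hb' (abs_nonneg _) (by positivity)
  have htpos : (0:ℝ) < t * (t + 1) := by nlinarith
  have hqq : (2/q) * (2/q) ≤ Bq D i j := by
    unfold Bq
    rw [div_mul_div_comm, ← htdef, div_le_div_iff₀ (by positivity) htpos]
    nlinarith
  have hBpos : (0:ℝ) ≤ Bq D i j := by unfold Bq; positivity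
  have hd1 : (1:ℝ) ≤ (d:ℝ) := by exact_mod_cast hd
  have hA : w i j * w i j * ((d:ℝ) * S) ≤ Bq D i j * (d:ℝ) := by
    calc w i j * w i j * ((d:ℝ) * S) ≤ Bq D i j * ((d:ℝ) * S) :=
          mul_le_mul_of_nonneg_right (hwwij.trans hqq) (by positivity)
      _ ≤ Bq D i j * ((d:ℝ) * 1) := by
          refine mul_le_mul_of_nonneg_left ?_ hBpos
          exact mul_le_mul_of_nonneg_left hS1 (Nat.cast_nonneg d)
      _ = Bq D i j * (d:ℝ) := by ring
  have hB2 : w i j * w j i * S ≤ Bq D i j := by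
    calc w i j * w j i * S ≤ Bq D i j * S :=
          mul_le_mul_of_nonneg_right (hwwji.trans hqq) hS0
      _ ≤ Bq D i j * 1 := mul_le_mul_of_nonneg_left hS1 hBpos
      _ = Bq D i j := mul_one _
  nlinarith [mul_nonneg hBpos (sub_nonneg.mpr hd1)]

lemma inner_bound {D : ℕ} (i : Fin D) :
    (∑ j, if i ≠ j then Bq D i j else 0) ≤ 8 / ((i:ℕ) + 1 : ℝ) := by
  rw [← Finset.sum_filter]
  set s : ℕ := max 1 (i:ℕ) with hs
  have himg : ∀ j ∈ Finset.univ.filter (fun j : Fin D => i ≠ j),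
      ∀ j' ∈ Finset.univ.filter (fun j : Fin D => i ≠ j),
      (i:ℕ) + (j:ℕ) = (i:ℕ) + (j':ℕ) → j = j' :=
    fun j _ j' _ h => Fin.val_injective (by omega)
  have heq1 := Finset.sum_image (s := Finset.univ.filter (fun j : Fin D => i ≠ j))
    (f := fun n : ℕ => 4 / ((n:ℝ) * ((n:ℝ) + 1)))
    (g := fun j : Fin D => (i:ℕ) + (j:ℕ)) himg
  rw [show (∑ j ∈ Finset.univ.filter (fun j : Fin D => i ≠ j), Bq D i j)
      = ∑ j ∈ Finset.univ.filter (fun j : Fin D => i ≠ j),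
        4 / (((((i:ℕ)+(j:ℕ)) : ℕ) : ℝ) * (((((i:ℕ)+(j:ℕ)) : ℕ) : ℝ) + 1)) from rfl, ← heq1]
  have hsub : (Finset.univ.filter (fun j : Fin D => i ≠ j)).image
      (fun j : Fin D => (i:ℕ) + (j:ℕ)) ⊆ Finset.Ico s ((i:ℕ) + D) := by
    intro n hn
    rcases Finset.mem_image.mp hn with ⟨j, hj, rfl⟩
    have hjne : i ≠ j := (Finset.mem_filter.mp hj).2
    have hvne : (i:ℕ) ≠ (j:ℕ) := fun h => hjne (Fin.val_injective h)
    have hjlt : (j:ℕ) < D := j.isLt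
    rw [Finset.mem_Ico]
    omega
  have hle1 : (∑ n ∈ (Finset.univ.filter (fun j : Fin D => i ≠ j)).image
      (fun j : Fin D => (i:ℕ) + (j:ℕ)), 4 / ((n : ℝ) * ((n : ℝ) + 1)))
      ≤ ∑ n ∈ Finset.Ico s ((i:ℕ) + D), 4 / ((n : ℝ) * ((n : ℝ) + 1)) :=
    Finset.sum_le_sum_of_subset_of_nonneg hsub (fun n _ _ => by positivity)
  have hts : ∀ n ∈ Finset.Ico s ((i:ℕ) + D),
      4 / ((n : ℝ) * ((n : ℝ) + 1)) = 4 / (n : ℝ) - 4 / ((n : ℝ) + 1) := by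
    intro n hn
    have h1 : 1 ≤ n := le_trans (le_max_left 1 _) (Finset.mem_Ico.mp hn).1
    have h0 : (0:ℝ) < (n:ℝ) := by exact_mod_cast h1
    field_simp
    ring
  have htel : (∑ n ∈ Finset.Ico s ((i:ℕ) + D), 4 / ((n : ℝ) * ((n : ℝ) + 1)))
      = 4 / (s : ℝ) - 4 / (((s + ((i:ℕ) + D - s)) : ℕ) : ℝ) := by
    rw [Finset.sum_congr rfl hts, Finset.sum_Ico_eq_sum_range]
    have hterm2 : ∀ k ∈ Finset.range ((i:ℕ) + D - s),
        4 / ((s + k : ℕ) : ℝ) - 4 / (((s + k : ℕ) : ℝ) + 1)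
        = (fun m : ℕ => 4 / ((s + m : ℕ) : ℝ)) k
          - (fun m : ℕ => 4 / ((s + m : ℕ) : ℝ)) (k + 1) := by
      intro k _
      simp only
      push_cast
      ring
    rw [Finset.sum_congr rfl hterm2, Finset.sum_range_sub' (fun m : ℕ => 4 / ((s + m : ℕ) : ℝ))]
    simp
  rw [htel] at hle1
  have hgm : (0:ℝ) ≤ 4 / (((s + ((i:ℕ) + D - s)) : ℕ) : ℝ) := by positivity
  have hg0 : 4 / (s : ℝ) ≤ 8 / ((i:ℕ) + 1 : ℝ) := by
    rcases Nat.eq_zero_or_pos (i:ℕ) with h | h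
    · rw [hs, h]
      norm_num
    · rw [hs, max_eq_right h]
      have hi1 : (1:ℝ) ≤ (i:ℕ) := by exact_mod_cast h
      rw [div_le_div_iff₀ (by linarith) (by linarith)]
      nlinarith
  linarith

lemma harmonic_cast (D : ℕ) :
    ((harmonic D : ℚ) : ℝ) = ∑ n ∈ Finset.range D, ((n:ℝ) + 1)⁻¹ := by
  unfold harmonic
  push_cast
  rfl

lemma exact_bound {D : ℕ} (hD : 2 ≤ D) (d : ℕ) (hd : 1 ≤ d) (S : ℝ)
    (hS0 : 0 ≤ S) (hS1 : S ≤ 1) (w : Fin D → Fin D → ℝ)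
    (hw : ∀ i j : Fin D, |w i j| ≤
      2 / (2 * (min (i : ℕ) (j : ℕ) + 1 : ℝ) + (max (i : ℕ) (j : ℕ) + 1 : ℝ) - 2)) :
    (∑ i, ∑ j, if i ≠ j then w i j * w i j * ((d:ℝ) * S) + w i j * w j i * S else 0)
      ≤ 64 * (d:ℝ) * Real.log D := by
  have step1 : (∑ i, ∑ j, if i ≠ j then w i j * w i j * ((d:ℝ) * S) + w i j * w j i * S else 0)
      ≤ ∑ i, ∑ j, (if i ≠ j then 2 * (d:ℝ) * Bq D i j else 0) :=
    Finset.sum_le_sum fun i _ => Finset.sum_le_sum fun j _ => by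
      by_cases hij : i ≠ j
      · rw [if_pos hij, if_pos hij]
        exact term_bound d hd S hS0 hS1 w hw i j hij
      · rw [if_neg hij, if_neg hij]
  have step2 : (∑ i, ∑ j, (if i ≠ j then 2 * (d:ℝ) * Bq D i j else 0))
      = 2 * (d:ℝ) * ∑ i : Fin D, ∑ j, (if i ≠ j then Bq D i j else 0) := by
    rw [Finset.mul_sum]
    refine Finset.sum_congr rfl fun i _ => ?_
    rw [Finset.mul_sum]
    refine Finset.sum_congr rfl fun j _ => ?_
    by_cases hij : i ≠ j <;> simp [hij]
  have step3 : (∑ i : Fin D, ∑ j, (if i ≠ j then Bq D i j else 0))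
      ≤ 8 * (1 + Real.log D) := by
    calc (∑ i : Fin D, ∑ j, (if i ≠ j then Bq D i j else 0))
        ≤ ∑ i : Fin D, 8 / ((i:ℕ) + 1 : ℝ) := Finset.sum_le_sum fun i _ => inner_bound i
      _ = ∑ n ∈ Finset.range D, 8 / ((n:ℝ) + 1) :=
          Fin.sum_univ_eq_sum_range (fun n : ℕ => 8 / ((n:ℝ) + 1)) D
      _ = 8 * ∑ n ∈ Finset.range D, ((n:ℝ) + 1)⁻¹ := by
          rw [Finset.mul_sum]
          exact Finset.sum_congr rfl fun n _ => div_eq_mul_inv _ _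
      _ = 8 * ((harmonic D : ℚ) : ℝ) := by rw [harmonic_cast]
      _ ≤ 8 * (1 + Real.log D) := by
          have := harmonic_le_one_add_log D
          linarith
  have hcast2 : (2:ℝ) ≤ (D:ℝ) := by exact_mod_cast hD
  have hlogD : Real.log 2 ≤ Real.log D := Real.log_le_log (by norm_num) hcast2
  have hl2 : (0.6931471803:ℝ) < Real.log 2 := Real.log_two_gt_d9
  have hd1 : (1:ℝ) ≤ (d:ℝ) := by exact_mod_cast hd
  have h3 : (1:ℝ) ≤ 3 * Real.log D := by nlinarith
  have h4 : 16 * (d:ℝ) * 1 ≤ 16 * (d:ℝ) * (3 * Real.log D) :=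
    mul_le_mul_of_nonneg_left h3 (by positivity)
  have hchain : (∑ i, ∑ j, if i ≠ j then
        w i j * w i j * ((d:ℝ) * S) + w i j * w j i * S else 0)
      ≤ 2 * (d:ℝ) * (8 * (1 + Real.log D)) := by
    refine step1.trans ?_
    rw [step2]
    exact mul_le_mul_of_nonneg_left step3 (by positivity)
  nlinarith [hchain, h4]

end CT

/-- With `x_1, …, x_D, x_q` i.i.d. `N(0, I_d)`, `‖θ‖ ≤ 1`, and
`ε = ∑_{i ≠ j} w_{ij} (θᵀx_i)(x_jᵀx_q)` where (1-indexed)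
`|w_{ij}| ≤ 2/(2 min(i,j) + max(i,j) - 2)`, one has `𝔼 ε = 0` and
`𝔼 ε² ≤ C d log D` for an absolute constant `C`. -/
theorem cross_term_mean_zero_and_variance_bound :
    ∃ C > (0 : ℝ), ∀ (d D : ℕ) (θ : Fin d → ℝ), (∑ k, θ k ^ 2) ≤ 1 →
      ∀ w : Fin D → Fin D → ℝ,
        (∀ i j : Fin D, |w i j| ≤
          2 / (2 * (min (i : ℕ) (j : ℕ) + 1 : ℝ) + (max (i : ℕ) (j : ℕ) + 1 : ℝ) - 2)) →
        (∫ p : (Fin D → Fin d → ℝ) × (Fin d → ℝ),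
            (∑ i : Fin D, ∑ j : Fin D, if i ≠ j then
                w i j * (∑ k, θ k * p.1 i k) * (∑ k, p.1 j k * p.2 k) else 0)
          ∂((Measure.pi fun _ : Fin D => Measure.pi fun _ : Fin d => gaussianReal 0 1).prod
              (Measure.pi fun _ : Fin d => gaussianReal 0 1)) = 0) ∧
        (∫ p : (Fin D → Fin d → ℝ) × (Fin d → ℝ),
            (∑ i : Fin D, ∑ j : Fin D, if i ≠ j then
                w i j * (∑ k, θ k * p.1 i k) * (∑ k, p.1 j k * p.2 k) else 0) ^ 2
          ∂((Measure.pi fun _ : Fin D => Measure.pi fun _ : Fin d => gaussianReal 0 1).prod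
              (Measure.pi fun _ : Fin d => gaussianReal 0 1)) ≤ C * d * Real.log D) := by
  refine ⟨64, by norm_num, fun d D θ hθ w hw => ⟨CT.mean_zero w θ, ?_⟩⟩
  have hval := CT.sq_value w θ
  refine le_trans (le_of_eq (?_ : _ = ∑ i : Fin D, ∑ j : Fin D,
    if i ≠ j then w i j * w i j * ((d:ℝ) * ∑ m, θ m * θ m)
      + w i j * w j i * ∑ m, θ m * θ m else 0)) ?_
  · exact hval
  set S := ∑ m, θ m * θ m with hSdef
  have hS0 : 0 ≤ S := Finset.sum_nonneg fun m _ => mul_self_nonneg _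
  have hS1 : S ≤ 1 := by
    have hSe : S = ∑ k, θ k ^ 2 :=
      Finset.sum_congr rfl fun k _ => (pow_two (θ k)).symm
    rw [hSe]
    exact hθ
  by_cases hd : d = 0
  · subst hd
    have hSz : S = 0 := by rw [hSdef]; simp
    have hz : (∑ i, ∑ j, if i ≠ j then
        w i j * w i j * ((0:ℕ) * S : ℝ) + w i j * w j i * S else 0) = 0 :=
      Finset.sum_eq_zero fun i _ => Finset.sum_eq_zero fun j _ => by
        by_cases hij : i ≠ j
        · simp [hij, hSz]
        · simp [hij]
    rw [hz]
    simp
  · by_cases hD : D ≤ 1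
    · have hij_eq : ∀ i j : Fin D, i = j := by
        intro i j
        have h1 := i.isLt
        have h2 := j.isLt
        exact Fin.ext (by omega)
      have hz : (∑ i, ∑ j, if i ≠ j then
          w i j * w i j * ((d:ℝ) * S) + w i j * w j i * S else 0) = 0 :=
        Finset.sum_eq_zero fun i _ => Finset.sum_eq_zero fun j _ => by
          simp [hij_eq i j]
      rw [hz]
      interval_cases D <;> simp
    · push_neg at hD
      exact CT.exact_bound hD d (Nat.one_le_iff_ne_zero.mpr hd) S hS0 hS1 w hw
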